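/- If a Laurent polynomial f satisfies equation (★) and f has a nonzero coefficient in some positive degree, then the coefficient of X⁰ in f is zero. -/

import Mathlib

open LaurentPolynomial

private lemma lp_mul_apply_of_le {K : Type*} [Field K] {p q : K[T;T⁻¹]} {a b : ℤ}
    (hp : ∀ x ∈ p.coeff.support, x ≤ a) (hq : ∀ x ∈ q.coeff.support, x ≤ b) :
    (p * q).coeff (a + b) = p.coeff a * q.coeff b := by
  classical
  rw [AddMonoidAlgebra.coeff_mul]
  simp_rw [Finsupp.sum]
  rw [Finset.sum_eq_single a, Finset.sum_eq_single b, if_pos rfl]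
  · intro y hy hne
    exact if_neg (by have := hq y hy; omega)
  · intro h
    rw [if_pos rfl, Finsupp.notMem_support_iff.1 h, mul_zero]
  · intro x hx hne
    refine Finset.sum_eq_zero fun y hy => if_neg ?_
    have h1 := hp x hx; have h2 := hq y hy; omega
  · intro h
    exact Finset.sum_eq_zero fun y _ => by simp [Finsupp.notMem_support_iff.1 h]

private lemma lp_mul_apply_eq_zero {K : Type*} [Field K] {p q : K[T;T⁻¹]} {a b t : ℤ}
    (hp : ∀ x ∈ p.coeff.support, x ≤ a) (hq : ∀ x ∈ q.coeff.support, x ≤ b) (ht : a + b < t) :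
    (p * q).coeff t = 0 := by
  rw [← Finsupp.notMem_support_iff]
  intro hmem
  obtain ⟨x, hx, y, hy, hxy⟩ := Finset.mem_add.1 (AddMonoidAlgebra.support_coeff_mul_subset p q hmem)
  exact absurd (hxy ▸ add_le_add (hp x hx) (hq y hy)) (not_le.2 ht)

/-- Equation (★): `(X² − 1)·f·f∨ = b·(X²·f∨ − f) − c·(X·f − X·f∨) + Q·(X² − 1)`,
where `Q = u·v`, `c = u − v`, `b = Q − 1` and `f∨` is the image of `f` under the
`K`-algebra involution of `K[X,X⁻¹]` sending `X` to `X⁻¹`. -/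
def SatStar {K : Type*} [Field K] (u v : K) (f : K[T;T⁻¹]) : Prop :=
  (T 2 - 1) * (f * invert f) =
    C (u * v - 1) * (T 2 * invert f - f)
      - C (u - v) * (T 1 * f - T 1 * invert f)
      + C (u * v) * (T 2 - 1)

/-- If a solution of (★) has a nonzero coefficient in some positive degree,
then its constant coefficient vanishes. -/
theorem statement6 {K : Type*} [Field K] (u v : K) (f : K[T;T⁻¹])
    (hf : SatStar u v f) (hpos : ∃ n : ℤ, 0 < n ∧ f.coeff n ≠ 0) :
    f.coeff 0 = 0 := by
  by_contra h0
  obtain ⟨n, hn, hfn⟩ := hpos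
  have hne : f.coeff.support.Nonempty := ⟨n, Finsupp.mem_support_iff.2 hfn⟩
  set N := f.coeff.support.max' hne with hNdef
  set M := f.coeff.support.min' hne with hMdef
  have hNmem : N ∈ f.coeff.support := f.coeff.support.max'_mem hne
  have hMmem : M ∈ f.coeff.support := f.coeff.support.min'_mem hne
  have hN : 0 < N := lt_of_lt_of_le hn (f.coeff.support.le_max' n (Finsupp.mem_support_iff.2 hfn))
  have hM : M ≤ 0 := f.coeff.support.min'_le 0 (Finsupp.mem_support_iff.2 h0)
  have hfbd : ∀ x ∈ f.coeff.support, x ≤ N := fun x hx => f.coeff.support.le_max' x hx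
  have hfhigh : ∀ t : ℤ, N < t → f.coeff t = 0 := fun t ht =>
    Finsupp.notMem_support_iff.1 (fun hm => absurd (hfbd t hm) (not_le.2 ht))
  have hflow : ∀ t : ℤ, t < M → f.coeff t = 0 := fun t ht =>
    Finsupp.notMem_support_iff.1 (fun hm => absurd (f.coeff.support.min'_le t hm) (not_le.2 ht))
  set g : K[T;T⁻¹] := invert f with hgdef
  have hgapp : ∀ t : ℤ, g.coeff t = f.coeff (-t) := fun t => invert_apply f t
  have hgbd : ∀ x ∈ g.coeff.support, x ≤ -M := by
    intro x hx
    have : f.coeff (-x) ≠ 0 := by rw [← hgapp]; exact Finsupp.mem_support_iff.1 hx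
    have := f.coeff.support.min'_le (-x) (Finsupp.mem_support_iff.2 this)
    omega
  set d : ℤ := N - M + 2 with hddef
  -- single-T multiplication and C multiplication coefficient formulas
  have hT : ∀ (k t : ℤ) (p : K[T;T⁻¹]), ((T k : K[T;T⁻¹]) * p).coeff t = p.coeff (t - k) := fun k t p => by
    rw [show (T k : K[T;T⁻¹]) = AddMonoidAlgebra.single k 1 from rfl,
      AddMonoidAlgebra.coeff_single_mul_apply, one_mul, neg_add_eq_sub]
  have hC : ∀ (r : K) (p : K[T;T⁻¹]) (t : ℤ), (C r * p).coeff t = r * p.coeff t := fun r p t => by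
    rw [show (C r : K[T;T⁻¹]) = AddMonoidAlgebra.single 0 r from rfl,
      AddMonoidAlgebra.coeff_single_zero_mul]
  have key := congrArg (fun p : K[T;T⁻¹] => p.coeff d) hf
  -- compute the LHS coefficient
  have hfg_top : (f * g).coeff (N + -M) = f.coeff N * f.coeff M := by
    rw [lp_mul_apply_of_le hfbd hgbd, hgapp, neg_neg]
  have hfg_d : (f * g).coeff d = 0 := lp_mul_apply_eq_zero hfbd hgbd (by omega)
  have hlhs : ((T 2 - 1 : K[T;T⁻¹]) * (f * g)).coeff d = f.coeff N * f.coeff M := by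
    rw [sub_mul, one_mul, AddMonoidAlgebra.coeff_sub, Finsupp.sub_apply, hT, hfg_d,
      show d - 2 = N + -M by omega, hfg_top, sub_zero]
  rw [hlhs] at key
  -- compute the RHS coefficient
  have h1 : ((T 2 : K[T;T⁻¹]) * g).coeff d = 0 := by
    rw [hT, hgapp]; exact hflow _ (by omega)
  have h2 : f.coeff d = 0 := hfhigh _ (by omega)
  have h3 : ((T 1 : K[T;T⁻¹]) * f).coeff d = 0 := by rw [hT]; exact hfhigh _ (by omega)
  have h4 : ((T 1 : K[T;T⁻¹]) * g).coeff d = 0 := by rw [hT, hgapp]; exact hflow _ (by omega)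
  have h5 : (T 2 : K[T;T⁻¹]).coeff d = 0 := by
    rw [show (T 2 : K[T;T⁻¹]) = AddMonoidAlgebra.single 2 1 from rfl, AddMonoidAlgebra.coeff_single]
    exact Finsupp.single_eq_of_ne (by omega)
  have h6 : (1 : K[T;T⁻¹]).coeff d = 0 := by
    rw [show (1 : K[T;T⁻¹]) = AddMonoidAlgebra.single 0 1 from rfl, AddMonoidAlgebra.coeff_single]
    exact Finsupp.single_eq_of_ne (by omega)
  rw [AddMonoidAlgebra.coeff_add, Finsupp.add_apply, AddMonoidAlgebra.coeff_sub, Finsupp.sub_apply, hC, hC, hC, AddMonoidAlgebra.coeff_sub, Finsupp.sub_apply,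
    AddMonoidAlgebra.coeff_sub, Finsupp.sub_apply, AddMonoidAlgebra.coeff_sub, Finsupp.sub_apply, h1, h2, h3, h4, h5, h6] at key
  simp only [sub_zero, zero_sub, mul_zero, sub_self, mul_neg, neg_zero, add_zero,
    sub_zero, zero_add] at key
  exact absurd key (mul_ne_zero (Finsupp.mem_support_iff.1 hNmem)
    (Finsupp.mem_support_iff.1 hMmem))
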